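/- If I ⊆ {1,…,n} is a set of consecutive indices with β_i = −1 for every i ∈ I (a run of 1's in the binary string), then every vector v ∈ ℝⁿ that vanishes outside I and satisfies Σ_{i∈I} v_i = 0 is an eigenvector of the Seidel matrix S for the eigenvalue 1, i.e., S v = v. -/

import Mathlib

open Polynomial Matrix

theorem stmt_9 (n : ℕ) (hn : 2 ≤ n) (β : ℕ → ℝ)
    (hβ : ∀ i, 1 ≤ i → i ≤ n → β i = 1 ∨ β i = -1)
    (S : Matrix (Fin n) (Fin n) ℝ)
    (hS : ∀ i j : Fin n, S i j = if i = j then 0 else β (max (i : ℕ) (j : ℕ) + 1))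
    (I : Finset (Fin n))
    (hIcons : ∀ i j l : Fin n, i ∈ I → l ∈ I → i ≤ j → j ≤ l → j ∈ I)
    (hIβ : ∀ i ∈ I, β ((i : ℕ) + 1) = -1)
    (v : Fin n → ℝ) (hv0 : ∀ i, i ∉ I → v i = 0)
    (hvsum : ∑ i ∈ I, v i = 0) :
    S.mulVec v = (1 : ℝ) • v := by
  funext i
  simp only [Matrix.mulVec, dotProduct, Pi.smul_apply, smul_eq_mul, one_mul]
  have hsub : ∑ j, S i j * v j = ∑ j ∈ I, S i j * v j := by
    refine (Finset.sum_subset (Finset.subset_univ I) ?_).symm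
    intro j _ hj
    rw [hv0 j hj, mul_zero]
  rw [hsub]
  by_cases hi : i ∈ I
  · rw [← Finset.add_sum_erase _ _ hi, hS i i, if_pos rfl, zero_mul, zero_add]
    have hterm : ∀ j ∈ I.erase i, S i j * v j = -v j := by
      intro j hj
      have hji : j ≠ i := Finset.ne_of_mem_erase hj
      have hjI : j ∈ I := Finset.mem_of_mem_erase hj
      rw [hS i j, if_neg (Ne.symm hji)]
      rcases le_total (i : ℕ) (j : ℕ) with h | h
      · rw [max_eq_right h, hIβ j hjI]; ring
      · rw [max_eq_left h, hIβ i hi]; ring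
    rw [Finset.sum_congr rfl hterm, Finset.sum_neg_distrib,
      Finset.sum_erase_eq_sub hi, hvsum]
    ring
  · rw [hv0 i hi]
    by_cases h : ∃ j ∈ I, i < j
    · obtain ⟨j0, hj0, hij0⟩ := h
      have hall : ∀ j ∈ I, i < j := by
        intro j hj
        by_contra hle
        push_neg at hle
        exact hi (hIcons j i j0 hj hj0 hle hij0.le)
      have hterm : ∀ j ∈ I, S i j * v j = -1 * v j := by
        intro j hj
        have hlt := hall j hj
        have hlt' : (i : ℕ) < (j : ℕ) := hlt
        rw [hS i j, if_neg (ne_of_lt hlt), max_eq_right hlt'.le, hIβ j hj]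
      rw [Finset.sum_congr rfl hterm, ← Finset.mul_sum, hvsum, mul_zero]
    · push_neg at h
      have hterm : ∀ j ∈ I, S i j * v j = β ((i : ℕ) + 1) * v j := by
        intro j hj
        have hle : j ≤ i := h j hj
        have hne : i ≠ j := fun e => hi (e ▸ hj)
        have hle' : (j : ℕ) ≤ (i : ℕ) := hle
        rw [hS i j, if_neg hne, max_eq_left hle']
      rw [Finset.sum_congr rfl hterm, ← Finset.mul_sum, hvsum, mul_zero]
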